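/- arXiv:2312.03956 — 2 statements merged into one kernel-verified Lean document; each statement's English description precedes it below -/
import Mathlib

section
/- For any segmented Smirnov word w, the standardization st(w) is a segmented permutation of the same shape with the same set of ascents, the same set of descents, and the same set of sminversions as w; in particular sminv(st(w)) = sminv(w). -/
/-- A word `w` together with a set `B` of block-start positions is a segmented
Smirnov word: block starts are valid positions, position `0` starts a block,
letters are positive, and two adjacent letters inside a common block differ. -/
def IsSSW (w : List ℕ) (B : Finset ℕ) : Prop :=
  (∀ b ∈ B, b < w.length) ∧ (w ≠ [] → 0 ∈ B) ∧ (∀ x ∈ w, 0 < x) ∧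
  (∀ i, i + 1 < w.length → (i + 1) ∉ B → w.getD i 0 ≠ w.getD (i + 1) 0)

def AscentAt (w : List ℕ) (B : Finset ℕ) (i : ℕ) : Prop :=
  i + 1 < w.length ∧ (i + 1) ∉ B ∧ w.getD i 0 < w.getD (i + 1) 0

def DescentAt (w : List ℕ) (B : Finset ℕ) (i : ℕ) : Prop :=
  i + 1 < w.length ∧ (i + 1) ∉ B ∧ w.getD (i + 1) 0 < w.getD i 0

noncomputable def numAsc (w : List ℕ) (B : Finset ℕ) : ℕ := Set.ncard {i | AscentAt w B i}

noncomputable def numDesc (w : List ℕ) (B : Finset ℕ) : ℕ := Set.ncard {i | DescentAt w B i}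

/-- `(i,j)` is a sminversion of the segmented word `(w, B)`. -/
def Sminversion (w : List ℕ) (B : Finset ℕ) (i j : ℕ) : Prop :=
  i < j ∧ j < w.length ∧ w.getD j 0 < w.getD i 0 ∧
    (j ∈ B ∨ w.getD i 0 < w.getD (j - 1) 0 ∨
     (i + 1 ≠ j ∧ w.getD (j - 1) 0 = w.getD i 0 ∧ (j - 1) ∈ B) ∨
     (i + 1 ≠ j ∧ 2 ≤ j ∧ w.getD (j - 1) 0 < w.getD (j - 2) 0 ∧
       w.getD (j - 1) 0 = w.getD i 0))

noncomputable def sminv (w : List ℕ) (B : Finset ℕ) : ℕ :=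
  Set.ncard {p : ℕ × ℕ | Sminversion w B p.1 p.2}

/-- The q-analogue `[m]_q = 1 + q + ⋯ + q^{m-1}` as a polynomial. -/
noncomputable def qInt (m : ℕ) : Polynomial ℕ := ∑ i ∈ Finset.range m, Polynomial.X ^ i

/-- The Gaussian binomial coefficient, via the q-Pascal recurrence. -/
noncomputable def qbinom : ℕ → ℕ → Polynomial ℕ
  | _, 0 => 1
  | 0, _ + 1 => 0
  | n + 1, k + 1 => qbinom n k + Polynomial.X ^ (k + 1) * qbinom n (k + 1)

/-- Position `i` is thick: it is the first letter of its block or is preceded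
(within its block) by a strictly larger letter. -/
def Thick (w : List ℕ) (B : Finset ℕ) (i : ℕ) : Prop :=
  i ∈ B ∨ w.getD i 0 < w.getD (i - 1) 0

/-- The strict reading order on positions of `w`: smaller letters first; among
equal letters, thin positions right to left, then thick positions left to
right. -/
def ReadLt (w : List ℕ) (B : Finset ℕ) (i j : ℕ) : Prop :=
  w.getD i 0 < w.getD j 0 ∨
    (w.getD i 0 = w.getD j 0 ∧
      ((¬Thick w B i ∧ Thick w B j) ∨
       (¬Thick w B i ∧ ¬Thick w B j ∧ j < i) ∨
       (Thick w B i ∧ Thick w B j ∧ i < j)))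

/-- The standardization of `w`: the letter at position `i` is the rank of `i`
in the reading order. -/
noncomputable def stword (w : List ℕ) (B : Finset ℕ) : List ℕ :=
  (List.range w.length).map fun i =>
    1 + Set.ncard {j | j < w.length ∧ ReadLt w B j i}

section Helpers
variable (w : List ℕ) (B : Finset ℕ)

lemma readLt_irrefl (i : ℕ) : ¬ ReadLt w B i i := by
  simp [ReadLt]

lemma readLt_trans {i j k : ℕ} (h1 : ReadLt w B i j) (h2 : ReadLt w B j k) :
    ReadLt w B i k := by
  unfold ReadLt at *
  rcases h1 with h1 | ⟨e1, t1⟩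
  · rcases h2 with h2 | ⟨e2, t2⟩
    · exact Or.inl (h1.trans h2)
    · exact Or.inl (e2 ▸ h1)
  · rcases h2 with h2 | ⟨e2, t2⟩
    · exact Or.inl (e1 ▸ h2)
    · refine Or.inr ⟨e1.trans e2, ?_⟩
      rcases t1 with ⟨hi, hj⟩ | ⟨hi, hj, hij⟩ | ⟨hi, hj, hij⟩ <;>
        rcases t2 with ⟨hj', hk⟩ | ⟨hj', hk, hjk⟩ | ⟨hj', hk, hjk⟩
      · exact absurd hj hj'
      · exact absurd hj hj'
      · exact Or.inl ⟨hi, hk⟩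
      · exact Or.inl ⟨hi, hk⟩
      · exact Or.inr (Or.inl ⟨hi, hk, by omega⟩)
      · exact absurd hj' hj
      · exact absurd hj hj'
      · exact absurd hj hj'
      · exact Or.inr (Or.inr ⟨hi, hk, by omega⟩)

lemma readLt_total {i j : ℕ} (hij : i ≠ j) : ReadLt w B i j ∨ ReadLt w B j i := by
  unfold ReadLt
  rcases Nat.lt_trichotomy (w.getD i 0) (w.getD j 0) with h | h | h
  · exact Or.inl (Or.inl h)
  · by_cases ti : Thick w B i <;> by_cases tj : Thick w B j
    · rcases hij.lt_or_gt with hl | hl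
      · exact Or.inl (Or.inr ⟨h, Or.inr (Or.inr ⟨ti, tj, hl⟩)⟩)
      · exact Or.inr (Or.inr ⟨h.symm, Or.inr (Or.inr ⟨tj, ti, hl⟩)⟩)
    · exact Or.inr (Or.inr ⟨h.symm, Or.inl ⟨tj, ti⟩⟩)
    · exact Or.inl (Or.inr ⟨h, Or.inl ⟨ti, tj⟩⟩)
    · rcases hij.lt_or_gt with hl | hl
      · exact Or.inr (Or.inr ⟨h.symm, Or.inr (Or.inl ⟨tj, ti, hl⟩)⟩)
      · exact Or.inl (Or.inr ⟨h, Or.inr (Or.inl ⟨ti, tj, hl⟩)⟩)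
  · exact Or.inr (Or.inl h)

lemma readLt_lt_iff {p q : ℕ} (h : p < q) :
    ReadLt w B p q ↔ (w.getD p 0 < w.getD q 0 ∨ (w.getD p 0 = w.getD q 0 ∧ Thick w B q)) := by
  unfold ReadLt
  constructor
  · rintro (h1 | ⟨e, ⟨_, t⟩ | ⟨_, _, hq⟩ | ⟨_, t, _⟩⟩)
    · exact Or.inl h1
    · exact Or.inr ⟨e, t⟩
    · omega
    · exact Or.inr ⟨e, t⟩
  · rintro (h1 | ⟨e, t⟩)
    · exact Or.inl h1
    · by_cases tp : Thick w B p
      · exact Or.inr ⟨e, Or.inr (Or.inr ⟨tp, t, h⟩)⟩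
      · exact Or.inr ⟨e, Or.inl ⟨tp, t⟩⟩

lemma readLt_gt_iff {p q : ℕ} (h : p < q) :
    ReadLt w B q p ↔ (w.getD q 0 < w.getD p 0 ∨ (w.getD q 0 = w.getD p 0 ∧ ¬ Thick w B q)) := by
  unfold ReadLt
  constructor
  · rintro (h1 | ⟨e, ⟨t, _⟩ | ⟨t, _, _⟩ | ⟨_, _, hq⟩⟩)
    · exact Or.inl h1
    · exact Or.inr ⟨e, t⟩
    · exact Or.inr ⟨e, t⟩
    · omega
  · rintro (h1 | ⟨e, t⟩)
    · exact Or.inl h1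
    · by_cases tp : Thick w B p
      · exact Or.inr ⟨e, Or.inl ⟨t, tp⟩⟩
      · exact Or.inr ⟨e, Or.inr (Or.inl ⟨t, tp, h⟩)⟩

noncomputable def rk (i : ℕ) : ℕ := Set.ncard {j | j < w.length ∧ ReadLt w B j i}

lemma rk_set_finite (i : ℕ) : {j | j < w.length ∧ ReadLt w B j i}.Finite :=
  (Set.finite_Iio _).subset fun _ hx => hx.1

lemma rk_lt_rk {i j : ℕ} (hi : i < w.length) (h : ReadLt w B i j) :
    rk w B i < rk w B j := by
  apply Set.ncard_lt_ncard _ (rk_set_finite w B j)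
  rw [Set.ssubset_def]
  constructor
  · intro k hk; exact ⟨hk.1, readLt_trans w B hk.2 h⟩
  · intro hsub
    exact readLt_irrefl w B i (hsub ⟨hi, h⟩).2

lemma rk_lt_len {i : ℕ} (hi : i < w.length) : rk w B i < w.length := by
  have h : rk w B i < Set.ncard (Set.Iio w.length) := by
    apply Set.ncard_lt_ncard _ (Set.finite_Iio _)
    rw [Set.ssubset_def]
    constructor
    · intro k hk; exact hk.1
    · intro hsub; exact readLt_irrefl w B i (hsub hi).2
  rwa [← Finset.coe_range, Set.ncard_coe_finset, Finset.card_range] at h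

lemma rk_lt_iff {i j : ℕ} (hi : i < w.length) (hj : j < w.length) :
    rk w B i < rk w B j ↔ ReadLt w B i j := by
  constructor
  · intro h
    by_contra hc
    rcases eq_or_ne i j with rfl | hne
    · omega
    · rcases readLt_total w B hne with h' | h'
      · exact hc h'
      · exact absurd (rk_lt_rk w B hj h') (by omega)
  · exact rk_lt_rk w B hi

lemma rk_inj {i j : ℕ} (hi : i < w.length) (hj : j < w.length)
    (h : rk w B i = rk w B j) : i = j := by
  by_contra hne
  rcases readLt_total w B hne with h' | h'
  · exact absurd (rk_lt_rk w B hi h') (by omega)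
  · exact absurd (rk_lt_rk w B hj h') (by omega)

lemma stword_length : (stword w B).length = w.length := by simp [stword]

lemma stword_getD {i : ℕ} (hi : i < w.length) :
    (stword w B).getD i 0 = 1 + rk w B i := by
  unfold stword rk
  rw [List.getD_eq_getElem _ _ (by simpa using hi)]
  simp

end Helpers

section Main
variable (w : List ℕ) (B : Finset ℕ)

lemma asc_iff (h : IsSSW w B) (i : ℕ) :
    AscentAt (stword w B) B i ↔ AscentAt w B i := by
  obtain ⟨hB, h0, hpos, hsm⟩ := h
  unfold AscentAt
  rw [stword_length]
  by_cases h1 : i + 1 < w.length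
  swap
  · simp [h1]
  refine and_congr_right fun _ => and_congr_right fun h2 => ?_
  rw [stword_getD w B (by omega), stword_getD w B h1,
    Nat.add_lt_add_iff_left, rk_lt_iff w B (by omega) h1,
    readLt_lt_iff w B (Nat.lt_succ_self i)]
  have hne := hsm i h1 h2
  constructor
  · rintro (h' | ⟨e, _⟩)
    · exact h'
    · exact absurd e hne
  · exact fun h' => Or.inl h'

lemma desc_iff (h : IsSSW w B) (i : ℕ) :
    DescentAt (stword w B) B i ↔ DescentAt w B i := by
  obtain ⟨hB, h0, hpos, hsm⟩ := h
  unfold DescentAt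
  rw [stword_length]
  by_cases h1 : i + 1 < w.length
  swap
  · simp [h1]
  refine and_congr_right fun _ => and_congr_right fun h2 => ?_
  rw [stword_getD w B (i := i + 1) h1, stword_getD w B (i := i) (by omega),
    Nat.add_lt_add_iff_left, rk_lt_iff w B h1 (by omega),
    readLt_gt_iff w B (Nat.lt_succ_self i)]
  have hne := hsm i h1 h2
  constructor
  · rintro (h' | ⟨e, _⟩)
    · exact h'
    · exact absurd e.symm hne
  · exact fun h' => Or.inl h'

lemma sminversion_iff (h : IsSSW w B) (i j : ℕ) :
    Sminversion (stword w B) B i j ↔ Sminversion w B i j := by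
  obtain ⟨hB, h0, hpos, hsm⟩ := h
  unfold Sminversion
  rw [stword_length]
  by_cases hij : i < j
  swap
  · simp [hij]
  by_cases hjn : j < w.length
  swap
  · simp [hjn]
  have hi : i < w.length := hij.trans hjn
  have hj1 : j - 1 < w.length := by omega
  have hj2 : j - 2 < w.length := by omega
  rw [stword_getD w B hjn, stword_getD w B hi, stword_getD w B hj1,
    stword_getD w B hj2]
  simp only [hij, hjn, true_and, Nat.add_lt_add_iff_left, Nat.add_right_cancel_iff,
    Nat.add_left_cancel_iff]
  -- now in terms of rk
  have e1 : rk w B j < rk w B i ↔ ReadLt w B j i := rk_lt_iff w B hjn hi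
  have e2 : rk w B i < rk w B (j - 1) ↔ ReadLt w B i (j - 1) := rk_lt_iff w B hi hj1
  have e3 : rk w B (j - 1) = rk w B i ↔ j - 1 = i := by
    constructor
    · exact rk_inj w B hj1 hi
    · rintro rfl; rfl
  rw [e1, e2, e3]
  -- characterize ReadLt j i
  have c1 : ReadLt w B j i ↔
      (w.getD j 0 < w.getD i 0 ∨ (w.getD j 0 = w.getD i 0 ∧ ¬ Thick w B j)) :=
    readLt_gt_iff w B hij
  by_cases hjB : j ∈ B
  · -- Thick j holds
    have tj : Thick w B j := Or.inl hjB
    simp only [hjB, true_or, and_true]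
    rw [c1]
    constructor
    · rintro (h' | ⟨_, ht⟩)
      · exact h'
      · exact absurd tj ht
    · exact fun h' => Or.inl h'
  · -- j ∉ B; Smirnov gives w_{j-1} ≠ w_j
    have hj1' : j - 1 + 1 = j := by omega
    have hne : w.getD (j - 1) 0 ≠ w.getD j 0 := by
      have := hsm (j - 1) (by omega : j - 1 + 1 < w.length) (by rwa [hj1'])
      rwa [hj1'] at this
    by_cases hij1 : i + 1 = j
    · -- i = j - 1
      have hji : j - 1 = i := by omega
      rw [hji]
      simp only [hij1, ne_eq, not_true_eq_false, false_and, or_false, and_false,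
        false_or]
      constructor
      · rintro ⟨hlt, (hb | hlt2)⟩
        · exact absurd hb hjB
        · exact absurd hlt2 (readLt_irrefl w B i)
      · rintro ⟨hlt, (hb | hlt2)⟩
        · exact absurd hb hjB
        · omega
    · -- i + 1 ≠ j, so i < j - 1 and j ≥ 2
      have hilt : i < j - 1 := by omega
      have h2j : 2 ≤ j := by omega
      have hjj2 : j - 1 - 1 = j - 2 := by omega
      have c2 : ReadLt w B i (j - 1) ↔
          (w.getD i 0 < w.getD (j - 1) 0 ∨
            (w.getD i 0 = w.getD (j - 1) 0 ∧ Thick w B (j - 1))) :=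
        readLt_lt_iff w B hilt
      have tj1 : Thick w B (j - 1) ↔
          ((j - 1) ∈ B ∨ w.getD (j - 1) 0 < w.getD (j - 2) 0) := by
        unfold Thick; rw [hjj2]
      -- thick j characterization
      have tj : ¬ Thick w B j ↔ w.getD (j - 1) 0 < w.getD j 0 := by
        unfold Thick
        constructor
        · intro ht
          push_neg at ht
          omega
        · intro hlt
          rintro (hb | hlt')
          · exact hjB hb
          · omega
      simp only [hjB, false_or, hij1, ne_eq, not_false_eq_true, true_and]
      rw [c1, c2]
      constructor
      · rintro ⟨ha, hb⟩
        have heq1 : j - 1 ≠ i := by omega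
        simp only [heq1, and_false, false_and, or_false, false_or] at hb
        -- hb : ReadLt-characterized i (j-1) facts
        have hjlt : w.getD j 0 < w.getD i 0 := by
          rcases ha with h' | ⟨e, ht⟩
          · exact h'
          · -- ¬Thick j : w_{j-1} < w_j = w_i, contradicting hb
            rw [tj] at ht
            rcases hb with h' | ⟨e2, _⟩
            · omega
            · omega
        refine ⟨hjlt, ?_⟩
        rcases hb with h' | ⟨e2, ht1⟩
        · exact Or.inl h'
        · rw [tj1] at ht1
          rcases ht1 with hb' | hlt'
          · exact Or.inr (Or.inl ⟨e2.symm, hb'⟩)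
          · exact Or.inr (Or.inr ⟨h2j, hlt', e2.symm⟩)
      · rintro ⟨ha, hb⟩
        refine ⟨Or.inl ha, ?_⟩
        rcases hb with h' | ⟨e2, hb'⟩ | ⟨_, hlt', e2⟩
        · exact Or.inl (Or.inl h')
        · exact Or.inl (Or.inr ⟨e2.symm, (tj1).mpr (Or.inl hb')⟩)
        · exact Or.inl (Or.inr ⟨e2.symm, (tj1).mpr (Or.inr hlt')⟩)

lemma stword_ssw (h : IsSSW w B) : IsSSW (stword w B) B := by
  obtain ⟨hB, h0, hpos, hsm⟩ := h
  refine ⟨?_, ?_, ?_, ?_⟩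
  · intro b hb; rw [stword_length]; exact hB b hb
  · intro hne
    apply h0
    intro hw
    apply hne
    simp [stword, hw]
  · intro x hx
    simp only [stword, List.mem_map] at hx
    obtain ⟨i, _, rfl⟩ := hx
    omega
  · intro i hlen _
    rw [stword_length] at hlen
    rw [stword_getD w B (by omega), stword_getD w B hlen]
    intro he
    have : i = i + 1 := rk_inj w B (by omega) hlen (by omega)
    omega

lemma stword_perm : (stword w B).Perm ((List.range w.length).map (· + 1)) := by
  apply List.perm_of_nodup_nodup_toFinset_eq
  · unfold stword
    refine List.Nodup.map_on ?_ List.nodup_range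
    intro x hx y hy hxy
    rw [List.mem_range] at hx hy
    apply rk_inj w B hx hy
    unfold rk
    omega
  · exact List.Nodup.map (fun a b hab => by omega) List.nodup_range
  · have hrange : (List.range w.length).toFinset = Finset.range w.length := by
      ext x; simp
    have himg : Finset.image (rk w B) (Finset.range w.length) =
        Finset.range w.length := by
      apply Finset.eq_of_subset_of_card_le
      · intro x hx
        simp only [Finset.mem_image, Finset.mem_range] at hx ⊢
        obtain ⟨i, hi, rfl⟩ := hx
        exact rk_lt_len w B hi
      · rw [Finset.card_image_of_injOn]
        intro a ha b hb hab
        exact rk_inj w B (by simpa using ha) (by simpa using hb) hab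
    ext x
    simp only [stword, List.mem_toFinset, List.mem_map, List.mem_range]
    constructor
    · rintro ⟨i, hi, rfl⟩
      exact ⟨rk w B i, rk_lt_len w B hi, by unfold rk; omega⟩
    · rintro ⟨i, hi, rfl⟩
      have hm : i ∈ Finset.image (rk w B) (Finset.range w.length) := by
        rw [himg]; exact Finset.mem_range.mpr hi
      obtain ⟨j, hj, hrkj⟩ := Finset.mem_image.mp hm
      exact ⟨j, by simpa using hj, by unfold rk at hrkj; omega⟩

end Main

/-- The standardization of a segmented Smirnov word is a segmented permutation
of the same shape, with the same ascents, descents and sminversions; in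
particular `sminv (st w) = sminv w`. -/
theorem stmt18 (w : List ℕ) (B : Finset ℕ) (h : IsSSW w B) :
    IsSSW (stword w B) B ∧
    (stword w B).Perm ((List.range w.length).map (· + 1)) ∧
    (∀ i, AscentAt (stword w B) B i ↔ AscentAt w B i) ∧
    (∀ i, DescentAt (stword w B) B i ↔ DescentAt w B i) ∧
    (∀ i j, Sminversion (stword w B) B i j ↔ Sminversion w B i j) ∧
    sminv (stword w B) B = sminv w B := by
  refine ⟨stword_ssw w B h, stword_perm w B, asc_iff w B h, desc_iff w B h,
      sminversion_iff w B h, ?_⟩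
  unfold sminv
  congr 1
  ext ⟨i, j⟩
  exact sminversion_iff w B h i j
end

section
/- If w is a segmented Smirnov word of size n with k ascents, l descents, maximal letter at most m, and no occurrence of m at the end of a block, then the q-enumerator with respect to sminv of all words obtained by inserting s occurrences of m at the ends of s distinct blocks equals q^{binom(s,2)} [n−k−l choose s]_q · q^{sminv(w)}. -/
/-- Insert the letter `m` immediately before every (original) position in `S`;
the first argument is the index of the head of the remaining list. -/
def multiInsert (m : ℕ) (S : Finset ℕ) : ℕ → List ℕ → List ℕ
  | i, [] => if i ∈ S then [m] else []
  | i, x :: xs => (if i ∈ S then [m] else []) ++ x :: multiInsert m S (i + 1) xs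

namespace S19
open Finset Polynomial

open Finset Polynomial

lemma qbinom_zero (n : ℕ) : qbinom n 0 = 1 := by cases n <;> rfl

lemma sumB (E : Finset ℕ) : ∀ s : ℕ,
    ∑ S ∈ E.powersetCard s,
        (X : Polynomial ℕ) ^ (∑ p ∈ S, (E.filter (fun e => p < e)).card)
      = X ^ (Nat.choose s 2) * qbinom E.card s := by
  induction E using Finset.induction_on_max with
  | empty =>
    intro s
    cases s with
    | zero => simp [qbinom_zero]
    | succ t =>
      rw [Finset.powersetCard_eq_empty.2 (by simp)]
      simp [qbinom]
  | insert a E' ha ih =>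
    intro s
    cases s with
    | zero => simp [qbinom_zero]
    | succ t =>
      have hanotin : a ∉ E' := fun h => lt_irrefl a (ha a h)
      rw [Finset.powersetCard_succ_insert hanotin]
      have hdisj : Disjoint (E'.powersetCard (t+1)) ((E'.powersetCard t).image (insert a)) := by
        rw [Finset.disjoint_left]
        intro S hS hS2
        simp only [Finset.mem_image] at hS2
        obtain ⟨T, hT, rfl⟩ := hS2
        exact (fun hsub => hanotin (hsub (Finset.mem_insert_self a T)))
          (Finset.mem_powersetCard.1 hS).1
      rw [Finset.sum_union hdisj]
      -- rewrite exponents on the first sum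
      have key : ∀ T ∈ E'.powersetCard t ∪ E'.powersetCard (t+1), ∀ p ∈ T,
          ((insert a E').filter (fun e => p < e)).card
            = (E'.filter (fun e => p < e)).card + 1 := by
        intro T hT p hp
        have hpE : p ∈ E' := by
          rcases Finset.mem_union.1 hT with h1 | h1 <;>
            exact (Finset.mem_powersetCard.1 h1).1 hp
        have : (insert a E').filter (fun e => p < e)
            = insert a (E'.filter (fun e => p < e)) := by
          rw [Finset.filter_insert, if_pos (ha p hpE)]
        rw [this, Finset.card_insert_of_notMem (fun hc => hanotin (Finset.mem_filter.1 hc).1)]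
      have sum1 : ∑ S ∈ E'.powersetCard (t+1),
          (X : Polynomial ℕ) ^ (∑ p ∈ S, ((insert a E').filter (fun e => p < e)).card)
          = X ^ (t+1) * ∑ S ∈ E'.powersetCard (t+1),
              (X : Polynomial ℕ) ^ (∑ p ∈ S, (E'.filter (fun e => p < e)).card) := by
        rw [Finset.mul_sum]
        apply Finset.sum_congr rfl
        intro S hS
        rw [Finset.sum_congr rfl (key S (Finset.mem_union_right _ hS) ), Finset.sum_add_distrib]
        rw [Finset.sum_const, smul_eq_mul, mul_one,
          (Finset.mem_powersetCard.1 hS).2, ← pow_add]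
        ring_nf
      have injins : ∀ T ∈ E'.powersetCard t, ∀ T' ∈ E'.powersetCard t,
          insert a T = insert a T' → T = T' := by
        intro T hT T' hT' hEq
        have haT : a ∉ T := fun hc => hanotin ((Finset.mem_powersetCard.1 hT).1 hc)
        have haT' : a ∉ T' := fun hc => hanotin ((Finset.mem_powersetCard.1 hT').1 hc)
        rw [← Finset.erase_insert haT, ← Finset.erase_insert haT', hEq]
      rw [Finset.sum_image injins]
      have sum2 : ∑ T ∈ E'.powersetCard t,
          (X : Polynomial ℕ) ^ (∑ p ∈ insert a T, ((insert a E').filter (fun e => p < e)).card)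
          = X ^ t * ∑ S ∈ E'.powersetCard t,
              (X : Polynomial ℕ) ^ (∑ p ∈ S, (E'.filter (fun e => p < e)).card) := by
        rw [Finset.mul_sum]
        apply Finset.sum_congr rfl
        intro T hT
        have haT : a ∉ T := fun hc => hanotin ((Finset.mem_powersetCard.1 hT).1 hc)
        rw [Finset.sum_insert haT]
        have fa : ((insert a E').filter (fun e => a < e)).card = 0 := by
          rw [Finset.card_eq_zero, Finset.filter_insert, if_neg (lt_irrefl a)]
          rw [Finset.filter_eq_empty_iff]
          intro e he
          exact not_lt_of_gt (ha e he)
        rw [fa, Finset.sum_congr rfl (key T (Finset.mem_union_left _ hT)),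
          Finset.sum_add_distrib, Finset.sum_const, smul_eq_mul, mul_one,
          (Finset.mem_powersetCard.1 hT).2]
        rw [zero_add, ← pow_add]
        ring_nf
      rw [sum1, sum2, ih (t+1), ih t]
      have hcard : (insert a E').card = E'.card + 1 := Finset.card_insert_of_notMem hanotin
      rw [hcard]
      show _ = X ^ (t+1).choose 2 * qbinom (E'.card + 1) (t + 1) 
      rw [show qbinom (E'.card + 1) (t + 1) = qbinom E'.card t + X ^ (t+1) * qbinom E'.card (t+1) from rfl]
      have hch : (t+1).choose 2 = t.choose 2 + t := by
        rw [Nat.choose_succ_succ]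
        simp [Nat.choose_one_right, Nat.add_comm]
      rw [hch]
      ring
end S19

namespace S19
open Finset

def sig (S : Finset ℕ) (i : ℕ) : ℕ := i + (S.filter (fun p => p ≤ i)).card
def tau (S : Finset ℕ) (p : ℕ) : ℕ := p + (S.filter (fun q => q < p)).card

lemma sig_strictMono (S : Finset ℕ) : StrictMono (sig S) := by
  intro i j hij
  unfold sig
  have : (S.filter (fun p => p ≤ i)).card ≤ (S.filter (fun p => p ≤ j)).card :=
    Finset.card_le_card (Finset.monotone_filter_right S (fun p _ hp => le_trans hp (le_of_lt hij)))
  omega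

lemma sig_lt_sig (S : Finset ℕ) {i j : ℕ} : sig S i < sig S j ↔ i < j :=
  (sig_strictMono S).lt_iff_lt

lemma sig_inj (S : Finset ℕ) {i j : ℕ} (h : sig S i = sig S j) : i = j :=
  (sig_strictMono S).injective h

lemma tau_strictMono (S : Finset ℕ) : StrictMono (tau S) := by
  intro i j hij
  unfold tau
  have : (S.filter (fun p => p < i)).card ≤ (S.filter (fun p => p < j)).card :=
    Finset.card_le_card (Finset.monotone_filter_right S (fun p _ hp => lt_trans hp hij))
  omega

lemma tau_add_one {S : Finset ℕ} {p : ℕ} (hp : p ∈ S) : tau S p + 1 = sig S p := by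
  unfold tau sig
  have : S.filter (fun q => q ≤ p) = insert p (S.filter (fun q => q < p)) := by
    ext q
    simp only [Finset.mem_filter, Finset.mem_insert]
    constructor
    · rintro ⟨hq, hle⟩
      rcases lt_or_eq_of_le hle with h | h
      · exact Or.inr ⟨hq, h⟩
      · exact Or.inl h
    · rintro (rfl | ⟨hq, hlt⟩)
      · exact ⟨hp, le_refl _⟩
      · exact ⟨hq, le_of_lt hlt⟩
  rw [this, Finset.card_insert_of_notMem (by simp)]
  omega

lemma sig_le_tau {S : Finset ℕ} {i p : ℕ} (hi : i < p) : sig S i < tau S p := by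
  unfold sig tau
  have : (S.filter (fun q => q ≤ i)).card ≤ (S.filter (fun q => q < p)).card :=
    Finset.card_le_card (Finset.monotone_filter_right S (fun q _ hq => lt_of_le_of_lt hq hi))
  omega

lemma tau_lt_sig {S : Finset ℕ} {i p : ℕ} (hp : p ∈ S) (hi : p ≤ i) : tau S p < sig S i := by
  calc tau S p < sig S p := by rw [← tau_add_one hp]; omega
  _ ≤ sig S i := (sig_strictMono S).monotone hi

lemma sig_ne_tau {S : Finset ℕ} {i p : ℕ} (hp : p ∈ S) : sig S i ≠ tau S p := by
  rcases lt_or_ge i p with h | h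
  · exact ne_of_lt (sig_le_tau h)
  · exact ne_of_gt (tau_lt_sig hp h)

lemma tau_lt_sig_iff {S : Finset ℕ} {i p : ℕ} (hp : p ∈ S) : tau S p < sig S i ↔ p ≤ i := by
  constructor
  · intro h
    by_contra hc
    push_neg at hc
    exact absurd (lt_trans (sig_le_tau hc) h) (lt_irrefl _)
  · exact tau_lt_sig hp

-- length of multiInsert
lemma mi_length (m : ℕ) (S : Finset ℕ) :
    ∀ (xs : List ℕ) (i : ℕ), (multiInsert m S i xs).length
      = xs.length + (S.filter (fun p => i ≤ p ∧ p ≤ i + xs.length)).card := by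
  intro xs
  induction xs with
  | nil =>
    intro i
    by_cases hi : i ∈ S
    · rw [multiInsert, if_pos hi]
      have : S.filter (fun p => i ≤ p ∧ p ≤ i) = {i} := by
        ext q; simp only [Finset.mem_filter, Finset.mem_singleton]
        constructor
        · rintro ⟨_, h1, h2⟩; omega
        · rintro rfl; exact ⟨hi, le_refl _, le_refl _⟩
      simp [this]
    · rw [multiInsert, if_neg hi]
      have : S.filter (fun p => i ≤ p ∧ p ≤ i) = ∅ := by
        rw [Finset.filter_eq_empty_iff]
        intro q hq ⟨h1, h2⟩
        have : q = i := by omega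
        exact hi (this ▸ hq)
      simp [this]
  | cons x xs ih =>
    intro i
    rw [multiInsert]
    have hsplit : S.filter (fun p => i ≤ p ∧ p ≤ i + (x :: xs).length)
        = (S.filter (fun p => p = i)) ∪ S.filter (fun p => i + 1 ≤ p ∧ p ≤ (i+1) + xs.length) := by
      ext q
      simp only [Finset.mem_filter, Finset.mem_union, List.length_cons]
      constructor
      · rintro ⟨hq, h1, h2⟩
        by_cases hqi : q = i
        · exact Or.inl ⟨hq, hqi⟩
        · exact Or.inr ⟨hq, by omega⟩
      · rintro (⟨hq, rfl⟩ | ⟨hq, h1, h2⟩)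
        · exact ⟨hq, by omega⟩
        · exact ⟨hq, by omega⟩
    rw [hsplit, Finset.card_union_of_disjoint]
    · have hcard : (S.filter (fun p => p = i)).card = if i ∈ S then 1 else 0 := by
        by_cases hi : i ∈ S
        · rw [if_pos hi]
          have : S.filter (fun p => p = i) = {i} := by
            ext q; simp only [Finset.mem_filter, Finset.mem_singleton]
            exact ⟨fun ⟨_, h⟩ => h, fun h => ⟨h ▸ hi, h⟩⟩
          simp [this]
        · rw [if_neg hi]
          rw [Finset.card_eq_zero, Finset.filter_eq_empty_iff]
          rintro q hq rfl; exact hi hq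
      by_cases hi : i ∈ S <;>
        simp [hi, ih (i+1), hcard, List.length_append, List.length_cons] <;> omega
    · rw [Finset.disjoint_left]
      rintro q hq1 hq2
      simp only [Finset.mem_filter] at hq1 hq2
      omega

end S19

namespace S19
open Finset

lemma filter_card_split (S : Finset ℕ) (i j : ℕ) :
    (S.filter (fun p => i ≤ p ∧ p ≤ i + (j+1))).card
      = (if i ∈ S then 1 else 0) + (S.filter (fun p => i + 1 ≤ p ∧ p ≤ (i+1) + j)).card := by
  have hsplit : S.filter (fun p => i ≤ p ∧ p ≤ i + (j+1))
      = (S.filter (fun p => p = i)) ∪ S.filter (fun p => i + 1 ≤ p ∧ p ≤ (i+1) + j) := by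
    ext q
    simp only [Finset.mem_filter, Finset.mem_union]
    constructor
    · rintro ⟨hq, h1, h2⟩
      by_cases hqi : q = i
      · exact Or.inl ⟨hq, hqi⟩
      · exact Or.inr ⟨hq, by omega⟩
    · rintro (⟨hq, rfl⟩ | ⟨hq, h1, h2⟩)
      · exact ⟨hq, by omega⟩
      · exact ⟨hq, by omega⟩
  rw [hsplit, Finset.card_union_of_disjoint]
  · congr 1
    by_cases hi : i ∈ S
    · rw [if_pos hi]
      have : S.filter (fun p => p = i) = {i} := by
        ext q; simp only [Finset.mem_filter, Finset.mem_singleton]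
        exact ⟨fun ⟨_, h⟩ => h, fun h => ⟨h ▸ hi, h⟩⟩
      simp [this]
    · rw [if_neg hi, Finset.card_eq_zero, Finset.filter_eq_empty_iff]
      rintro q hq rfl; exact hi hq
  · rw [Finset.disjoint_left]
    rintro q hq1 hq2
    simp only [Finset.mem_filter] at hq1 hq2
    omega

lemma filter_lt_card_split (S : Finset ℕ) (i p : ℕ) (hip : i < p) :
    (S.filter (fun q => i ≤ q ∧ q < p)).card
      = (if i ∈ S then 1 else 0) + (S.filter (fun q => i + 1 ≤ q ∧ q < p)).card := by
  have hsplit : S.filter (fun q => i ≤ q ∧ q < p)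
      = (S.filter (fun q => q = i)) ∪ S.filter (fun q => i + 1 ≤ q ∧ q < p) := by
    ext q
    simp only [Finset.mem_filter, Finset.mem_union]
    constructor
    · rintro ⟨hq, h1, h2⟩
      by_cases hqi : q = i
      · exact Or.inl ⟨hq, hqi⟩
      · exact Or.inr ⟨hq, by omega⟩
    · rintro (⟨hq, rfl⟩ | ⟨hq, h1, h2⟩)
      · exact ⟨hq, by omega⟩
      · exact ⟨hq, by omega⟩
  rw [hsplit, Finset.card_union_of_disjoint]
  · congr 1
    by_cases hi : i ∈ S
    · rw [if_pos hi]
      have : S.filter (fun q => q = i) = {i} := by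
        ext q; simp only [Finset.mem_filter, Finset.mem_singleton]
        exact ⟨fun ⟨_, h⟩ => h, fun h => ⟨h ▸ hi, h⟩⟩
      simp [this]
    · rw [if_neg hi, Finset.card_eq_zero, Finset.filter_eq_empty_iff]
      rintro q hq rfl; exact hi hq
  · rw [Finset.disjoint_left]
    rintro q hq1 hq2
    simp only [Finset.mem_filter] at hq1 hq2
    omega

lemma mi_getD_orig (m : ℕ) (S : Finset ℕ) :
    ∀ (xs : List ℕ) (i j : ℕ), j < xs.length →
      (multiInsert m S i xs).getD (j + (S.filter (fun p => i ≤ p ∧ p ≤ i + j)).card) 0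
        = xs.getD j 0 := by
  intro xs
  induction xs with
  | nil => intro i j hj; simp at hj
  | cons x xs ih =>
    intro i j hj
    rw [multiInsert]
    cases j with
    | zero =>
      have hcard : (S.filter (fun p => i ≤ p ∧ p ≤ i + 0)).card = if i ∈ S then 1 else 0 := by
        by_cases hi : i ∈ S
        · rw [if_pos hi]
          have : S.filter (fun p => i ≤ p ∧ p ≤ i) = {i} := by
            ext q; simp only [Finset.mem_filter, Finset.mem_singleton]
            constructor
            · rintro ⟨_, h1, h2⟩; omega
            · rintro rfl; exact ⟨hi, le_refl _, le_refl _⟩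
          simp [this]
        · rw [if_neg hi, Finset.card_eq_zero, Finset.filter_eq_empty_iff]
          rintro q hq ⟨h1, h2⟩
          have : q = i := by omega
          exact hi (this ▸ hq)
      rw [hcard]
      by_cases hi : i ∈ S
      · simp [hi]
      · simp [hi]
    | succ j =>
      rw [filter_card_split]
      have := ih (i+1) j (by simpa using hj)
      by_cases hi : i ∈ S
      · rw [if_pos hi]
        simp only [if_pos hi, List.cons_append, List.nil_append]
        show List.getD _ (j + 1 + (1 + _)) 0 = _
        have harith : j + 1 + (1 + (S.filter (fun p => i + 1 ≤ p ∧ p ≤ (i+1) + j)).card)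
            = (j + (S.filter (fun p => i + 1 ≤ p ∧ p ≤ (i+1) + j)).card) + 1 + 1 := by omega
        rw [harith, List.getD_cons_succ, List.getD_cons_succ, this]
        simp
      · rw [if_neg hi]
        simp only [if_neg hi, List.nil_append]
        show List.getD _ (j + 1 + (0 + _)) 0 = _
        have harith : j + 1 + (0 + (S.filter (fun p => i + 1 ≤ p ∧ p ≤ (i+1) + j)).card)
            = (j + (S.filter (fun p => i + 1 ≤ p ∧ p ≤ (i+1) + j)).card) + 1 := by omega
        rw [harith, List.getD_cons_succ, this]
        simp

lemma mi_getD_ins (m : ℕ) (S : Finset ℕ) :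
    ∀ (xs : List ℕ) (i p : ℕ), p ∈ S → i ≤ p → p ≤ i + xs.length →
      (multiInsert m S i xs).getD ((p - i) + (S.filter (fun q => i ≤ q ∧ q < p)).card) 0 = m := by
  intro xs
  induction xs with
  | nil =>
    intro i p hp hip hpi
    have : p = i := by simp at hpi; omega
    subst this
    rw [multiInsert, if_pos hp]
    have : S.filter (fun q => p ≤ q ∧ q < p) = ∅ := by
      rw [Finset.filter_eq_empty_iff]; rintro q _ ⟨h1, h2⟩; omega
    simp [this]
  | cons x xs ih =>
    intro i p hp hip hpi
    rw [multiInsert]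
    rcases eq_or_lt_of_le hip with rfl | hlt
    · have hemp : S.filter (fun q => i ≤ q ∧ q < i) = ∅ := by
        rw [Finset.filter_eq_empty_iff]; rintro q _ ⟨h1, h2⟩; omega
      simp [hemp, if_pos hp]
    · rw [filter_lt_card_split S i p hlt]
      have hrec := ih (i+1) p hp hlt (by simp at hpi ⊢; omega)
      by_cases hi : i ∈ S
      · rw [if_pos hi]
        simp only [if_pos hi, List.cons_append, List.nil_append]
        have harith : p - i + (1 + (S.filter (fun q => i + 1 ≤ q ∧ q < p)).card)
            = ((p - (i+1)) + (S.filter (fun q => i + 1 ≤ q ∧ q < p)).card) + 1 + 1 := by omega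
        rw [harith, List.getD_cons_succ, List.getD_cons_succ, hrec]
      · rw [if_neg hi]
        simp only [if_neg hi, List.nil_append]
        have harith : p - i + (0 + (S.filter (fun q => i + 1 ≤ q ∧ q < p)).card)
            = ((p - (i+1)) + (S.filter (fun q => i + 1 ≤ q ∧ q < p)).card) + 1 := by omega
        rw [harith, List.getD_cons_succ, hrec]

end S19

namespace S19
open Finset

variable {m : ℕ} {S : Finset ℕ} {w : List ℕ}

lemma mi_length0 (hS : ∀ p ∈ S, 1 ≤ p ∧ p ≤ w.length) :
    (multiInsert m S 0 w).length = w.length + S.card := by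
  rw [mi_length]
  congr 2
  apply Finset.filter_true_of_mem
  intro p hp
  exact ⟨Nat.zero_le p, by simpa using (hS p hp).2⟩

lemma mi_getD_sig {j : ℕ} (hj : j < w.length) :
    (multiInsert m S 0 w).getD (sig S j) 0 = w.getD j 0 := by
  have h := mi_getD_orig m S w 0 j hj
  have hfe : S.filter (fun p => 0 ≤ p ∧ p ≤ 0 + j) = S.filter (fun p => p ≤ j) :=
    Finset.filter_congr (by intro p _; simp)
  rw [hfe] at h
  exact h

lemma mi_getD_tau (hS : ∀ p ∈ S, p ≤ w.length) {p : ℕ} (hp : p ∈ S) :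
    (multiInsert m S 0 w).getD (tau S p) 0 = m := by
  have h := mi_getD_ins m S w 0 p hp (Nat.zero_le p) (by simpa using hS p hp)
  have hfe : S.filter (fun q => 0 ≤ q ∧ q < p) = S.filter (fun q => q < p) :=
    Finset.filter_congr (by intro q _; simp)
  rw [hfe, Nat.sub_zero] at h
  exact h

lemma sig_le (S : Finset ℕ) (j : ℕ) : sig S j ≤ j + S.card := by
  unfold sig
  have : (S.filter (fun q => q ≤ j)).card ≤ S.card := Finset.card_filter_le _ _
  omega

lemma cover (hS : ∀ p ∈ S, 1 ≤ p ∧ p ≤ w.length) {a : ℕ} (ha : a < w.length + S.card) :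
    (∃ j, j < w.length ∧ a = sig S j) ∨ (∃ p ∈ S, a = tau S p) := by
  set n := w.length with hn
  have hdisj : Disjoint ((Finset.range n).image (sig S)) (S.image (tau S)) := by
    rw [Finset.disjoint_left]
    intro b hb hb'
    simp only [Finset.mem_image, Finset.mem_range] at hb hb'
    obtain ⟨j, _, rfl⟩ := hb
    obtain ⟨p, hp, hpe⟩ := hb'
    exact sig_ne_tau hp hpe.symm
  have hA : (Finset.range n).image (sig S) ∪ S.image (tau S) = Finset.range (n + S.card) := by
    apply Finset.eq_of_subset_of_card_le
    · intro b hb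
      simp only [Finset.mem_union, Finset.mem_image, Finset.mem_range] at hb ⊢
      rcases hb with ⟨j, hj, rfl⟩ | ⟨p, hp, rfl⟩
      · have := sig_le S j; omega
      · have h1 := tau_add_one hp
        have h2 := sig_le S p
        have h3 := (hS p hp).2
        omega
    · rw [Finset.card_range, Finset.card_union_of_disjoint hdisj,
        Finset.card_image_of_injective _ (sig_strictMono S).injective,
        Finset.card_image_of_injective _ (tau_strictMono S).injective,
        Finset.card_range]
  have : a ∈ (Finset.range n).image (sig S) ∪ S.image (tau S) := by
    rw [hA, Finset.mem_range]; exact ha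
  simp only [Finset.mem_union, Finset.mem_image, Finset.mem_range] at this
  rcases this with ⟨j, hj, hje⟩ | ⟨p, hp, hpe⟩
  · exact Or.inl ⟨j, hj, hje.symm⟩
  · exact Or.inr ⟨p, hp, hpe.symm⟩

lemma mi_le (hS : ∀ p ∈ S, 1 ≤ p ∧ p ≤ w.length) (hm : ∀ x ∈ w, x ≤ m) (a : ℕ) :
    (multiInsert m S 0 w).getD a 0 ≤ m := by
  by_cases ha : a < w.length + S.card
  · rcases cover hS ha with ⟨j, hj, rfl⟩ | ⟨p, hp, rfl⟩
    · rw [mi_getD_sig hj, List.getD_eq_getElem _ _ hj]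
      exact hm _ (List.getElem_mem hj)
    · rw [mi_getD_tau (fun p hp => (hS p hp).2) hp]
  · rw [List.getD_eq_default]
    · exact Nat.zero_le m
    · rw [mi_length0 hS]; omega

lemma w_le (hm : ∀ x ∈ w, x ≤ m) (j : ℕ) : w.getD j 0 ≤ m := by
  by_cases hj : j < w.length
  · rw [List.getD_eq_getElem _ _ hj]
    exact hm _ (List.getElem_mem hj)
  · rw [List.getD_eq_default _ _ (by omega)]
    exact Nat.zero_le m

end S19


instance (w : List ℕ) (B : Finset ℕ) (i j : ℕ) : Decidable (Sminversion w B i j) := by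
  unfold Sminversion; infer_instance

namespace S19
open Finset

lemma sminv_eq (w : List ℕ) (B : Finset ℕ) :
    sminv w B = ((Finset.range w.length ×ˢ Finset.range w.length).filter
      (fun q => Sminversion w B q.1 q.2)).card := by
  unfold sminv
  rw [← Set.ncard_coe_finset]
  congr 1
  ext ⟨i, j⟩
  simp only [Finset.coe_filter, Finset.mem_product, Finset.mem_range, Set.mem_setOf_eq]
  constructor
  · intro hs
    exact ⟨⟨lt_trans hs.1 hs.2.1, hs.2.1⟩, hs⟩
  · exact fun hs => hs.2

lemma sig_ge (S : Finset ℕ) (j : ℕ) : j ≤ sig S j := Nat.le_add_right _ _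

lemma sig_zero {S : Finset ℕ} (hS : ∀ p ∈ S, 1 ≤ p) : sig S 0 = 0 := by
  unfold sig
  have : S.filter (fun p => p ≤ 0) = ∅ := by
    rw [Finset.filter_eq_empty_iff]
    intro q hq hle
    have := hS q hq; omega
  rw [this, Finset.card_empty]

lemma sig_pred {S : Finset ℕ} {j : ℕ} (hj : j ∉ S) (h1 : 1 ≤ j) :
    sig S (j - 1) + 1 = sig S j := by
  unfold sig
  have : S.filter (fun p => p ≤ j) = S.filter (fun p => p ≤ j - 1) := by
    apply Finset.filter_congr
    intro q hq
    constructor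
    · intro hle
      have : q ≠ j := fun hc => hj (hc ▸ hq)
      omega
    · intro hle; omega
  rw [this]
  omega

lemma sig_gap (S : Finset ℕ) {i j : ℕ} (hij : i < j) : sig S i + (j - i) ≤ sig S j := by
  unfold sig
  have : (S.filter (fun p => p ≤ i)).card ≤ (S.filter (fun p => p ≤ j)).card :=
    Finset.card_le_card (Finset.monotone_filter_right S (fun p _ hp => le_trans hp (le_of_lt hij)))
  omega

lemma sig_succ_eq {S : Finset ℕ} {i j : ℕ} (hj : j ∉ S) :
    sig S i + 1 = sig S j ↔ i + 1 = j := by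
  constructor
  · intro hq
    have hij : i < j := (sig_lt_sig S).1 (by omega)
    have := sig_gap S hij
    omega
  · intro hq
    subst hq
    have := sig_pred hj (by omega : 1 ≤ i + 1)
    exact this

section Main

variable {w : List ℕ} {B : Finset ℕ} {m : ℕ} {S : Finset ℕ}

lemma memE {p : ℕ} :
    p ∈ (insert w.length B).erase 0 ↔ p ≠ 0 ∧ (p = w.length ∨ p ∈ B) := by
  simp [Finset.mem_erase, Finset.mem_insert]

lemma hE1 (h : IsSSW w B) : ∀ p ∈ (insert w.length B).erase 0, 1 ≤ p ∧ p ≤ w.length := by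
  intro p hp
  rw [memE] at hp
  rcases hp.2 with rfl | hpB
  · exact ⟨by omega, le_refl _⟩
  · exact ⟨by omega, le_of_lt (h.1 p hpB)⟩

lemma blockm (h : IsSSW w B) (hm : ∀ x ∈ w, x ≤ m)
    (hno : ∀ p ∈ (insert w.length B).erase 0, w.getD (p - 1) 0 ≠ m)
    {b : ℕ} (hb : b ∈ B) (hbm : w.getD b 0 = m) :
    b + 1 < w.length ∧ (b + 1) ∉ (insert w.length B).erase 0 ∧ w.getD (b + 1) 0 < m := by
  have hbn : b < w.length := h.1 b hb
  have hb1E : (b + 1) ∉ (insert w.length B).erase 0 := by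
    intro hc
    have := hno _ hc
    simp only [Nat.add_sub_cancel] at this
    exact this hbm
  have hb1n : b + 1 ≠ w.length := by
    intro hc
    exact hb1E (memE.2 ⟨by omega, Or.inl hc⟩)
  have hb1lt : b + 1 < w.length := by omega
  have hb1B : (b + 1) ∉ B := by
    intro hc
    exact hb1E (memE.2 ⟨by omega, Or.inr hc⟩)
  have hne := h.2.2.2 b hb1lt hb1B
  have hle := w_le hm (b + 1) (m := m)
  exact ⟨hb1lt, hb1E, by omega⟩


lemma hmemB' {b : ℕ} : sig S b ∈ B.image (sig S) ↔ b ∈ B := by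
  constructor
  · intro hb
    obtain ⟨c, hc, hce⟩ := Finset.mem_image.1 hb
    rwa [← sig_inj S hce]
  · exact fun hb => Finset.mem_image_of_mem _ hb

lemma tau_notinB' {p : ℕ} (hp : p ∈ S) : tau S p ∉ B.image (sig S) := by
  intro hc
  obtain ⟨c, _, hce⟩ := Finset.mem_image.1 hc
  exact sig_ne_tau hp hce

lemma main_iff (h : IsSSW w B) (hm : ∀ x ∈ w, x ≤ m)
    (hno : ∀ p ∈ (insert w.length B).erase 0, w.getD (p - 1) 0 ≠ m)
    (hS : S ⊆ (insert w.length B).erase 0)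
    {i j : ℕ} (hij : i < j) (hjn : j < w.length) :
    Sminversion w B i j ↔
      Sminversion (multiInsert m S 0 w) (B.image (sig S)) (sig S i) (sig S j) := by
  have hS1 : ∀ p ∈ S, 1 ≤ p ∧ p ≤ w.length := fun p hp => hE1 h p (hS hp)
  have hS1' : ∀ p ∈ S, 1 ≤ p := fun p hp => (hS1 p hp).1
  set w' := multiInsert m S 0 w with hw'
  have hlen : w'.length = w.length + S.card := mi_length0 hS1
  have hgi : w'.getD (sig S i) 0 = w.getD i 0 := mi_getD_sig (lt_trans hij hjn)
  have hgj : w'.getD (sig S j) 0 = w.getD j 0 := mi_getD_sig hjn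
  have hsjlen : sig S j < w'.length := by
    have := sig_le S j; omega
  by_cases hjS : j ∈ S
  · have hjB : j ∈ B := by
      rcases (memE.1 (hS hjS)).2 with rfl | hb
      · omega
      · exact hb
    constructor
    · rintro ⟨-, -, hlt, -⟩
      exact ⟨(sig_lt_sig S).2 hij, hsjlen, by rw [hgi, hgj]; exact hlt,
        Or.inl (hmemB'.2 hjB)⟩
    · rintro ⟨-, -, hlt, -⟩
      rw [hgi, hgj] at hlt
      exact ⟨hij, hjn, hlt, Or.inl hjB⟩
  · have hj1 : 1 ≤ j := by omega
    have hpred : sig S (j - 1) + 1 = sig S j := sig_pred hjS hj1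
    have hgj1 : w'.getD (sig S j - 1) 0 = w.getD (j - 1) 0 := by
      rw [show sig S j - 1 = sig S (j - 1) by omega]
      exact mi_getD_sig (by omega)
    have hB'j1 : (sig S j - 1 ∈ B.image (sig S)) ↔ (j - 1) ∈ B := by
      rw [show sig S j - 1 = sig S (j - 1) by omega]
      exact hmemB'
    have hne_iff : sig S i + 1 ≠ sig S j ↔ i + 1 ≠ j := not_congr (sig_succ_eq hjS)
    have h2le : 2 ≤ sig S j ↔ 2 ≤ j := by
      constructor
      · intro h2
        by_contra hc
        push_neg at hc
        have hj1' : j = 1 := by omega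
        subst hj1'
        have h0 : sig S 0 = 0 := sig_zero hS1'
        rw [show (1 : ℕ) - 1 = 0 from rfl, h0] at hpred
        omega
      · intro h2
        have := sig_ge S j; omega
    have hgj2m : (j - 1) ∈ S → w'.getD (sig S j - 2) 0 = m := by
      intro hj1S
      have ht := tau_add_one hj1S
      rw [show sig S j - 2 = tau S (j - 1) by omega]
      exact mi_getD_tau (fun p hp => (hS1 p hp).2) hj1S
    have hgj2 : 2 ≤ j → (j - 1) ∉ S → w'.getD (sig S j - 2) 0 = w.getD (j - 2) 0 := by
      intro h2 hj1S
      have hp2 : sig S (j - 2) + 1 = sig S (j - 1) := by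
        have := sig_pred hj1S (by omega : 1 ≤ j - 1)
        rwa [show j - 1 - 1 = j - 2 by omega] at this
      rw [show sig S j - 2 = sig S (j - 2) by omega]
      exact mi_getD_sig (by omega)
    constructor
    · rintro ⟨-, -, hlt, hdis⟩
      refine ⟨(sig_lt_sig S).2 hij, hsjlen, by rw [hgi, hgj]; exact hlt, ?_⟩
      rcases hdis with hB | hlt2 | ⟨hne, heq, hmem⟩ | ⟨hne, h2, hlt4, heq4⟩
      · exact Or.inl (hmemB'.2 hB)
      · exact Or.inr (Or.inl (by rw [hgi, hgj1]; exact hlt2))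
      · exact Or.inr (Or.inr (Or.inl
          ⟨hne_iff.2 hne, by rw [hgi, hgj1]; exact heq, hB'j1.2 hmem⟩))
      · by_cases hj1S : (j - 1) ∈ S
        · refine Or.inr (Or.inr (Or.inr
            ⟨hne_iff.2 hne, h2le.2 h2, ?_, by rw [hgi, hgj1]; exact heq4⟩))
          rw [hgj1, hgj2m hj1S]
          have := w_le hm (j - 2) (m := m)
          omega
        · exact Or.inr (Or.inr (Or.inr ⟨hne_iff.2 hne, h2le.2 h2,
            by rw [hgj1, hgj2 h2 hj1S]; exact hlt4, by rw [hgi, hgj1]; exact heq4⟩))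
    · rintro ⟨-, -, hlt, hdis⟩
      rw [hgi, hgj] at hlt
      refine ⟨hij, hjn, hlt, ?_⟩
      rcases hdis with hB | hlt2 | ⟨hne, heq, hmem⟩ | ⟨hne, h2, hlt4, heq4⟩
      · exact Or.inl (hmemB'.1 hB)
      · rw [hgi, hgj1] at hlt2
        exact Or.inr (Or.inl hlt2)
      · rw [hgi, hgj1] at heq
        exact Or.inr (Or.inr (Or.inl ⟨hne_iff.1 hne, heq, hB'j1.1 hmem⟩))
      · by_cases hj1S : (j - 1) ∈ S
        · have hj1B : (j - 1) ∈ B := by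
            rcases (memE.1 (hS hj1S)).2 with he | hb
            · omega
            · exact hb
          rw [hgi, hgj1] at heq4
          exact Or.inr (Or.inr (Or.inl ⟨hne_iff.1 hne, heq4, hj1B⟩))
        · rw [hgi, hgj1] at heq4
          rw [hgj1, hgj2 (h2le.1 h2) hj1S] at hlt4
          exact Or.inr (Or.inr (Or.inr ⟨hne_iff.1 hne, h2le.1 h2, hlt4, heq4⟩))


def Qp (w : List ℕ) (B : Finset ℕ) (m p j : ℕ) : Prop :=
  p ≤ j ∧ w.getD j 0 < m ∧ (j ∈ B ∨ (1 ≤ j ∧ (j - 1) ∈ B ∧ w.getD (j - 1) 0 = m))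

instance (w : List ℕ) (B : Finset ℕ) (m p j : ℕ) : Decidable (Qp w B m p j) := by
  unfold Qp; infer_instance

lemma tau_iff (h : IsSSW w B) (hm : ∀ x ∈ w, x ≤ m)
    (hno : ∀ p ∈ (insert w.length B).erase 0, w.getD (p - 1) 0 ≠ m)
    (hS : S ⊆ (insert w.length B).erase 0)
    {p j : ℕ} (hp : p ∈ S) (hjn : j < w.length) :
    Sminversion (multiInsert m S 0 w) (B.image (sig S)) (tau S p) (sig S j)
      ↔ Qp w B m p j := by
  have hS1 : ∀ p ∈ S, 1 ≤ p ∧ p ≤ w.length := fun q hq => hE1 h q (hS hq)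
  have hS1' : ∀ q ∈ S, 1 ≤ q := fun q hq => (hS1 q hq).1
  set w' := multiInsert m S 0 w with hw'
  have hlen : w'.length = w.length + S.card := mi_length0 hS1
  have hgp : w'.getD (tau S p) 0 = m := mi_getD_tau (fun q hq => (hS1 q hq).2) hp
  have hgj : w'.getD (sig S j) 0 = w.getD j 0 := mi_getD_sig hjn
  have hsjlen : sig S j < w'.length := by
    have := sig_le S j; omega
  constructor
  · rintro ⟨hlt0, -, hlt, hdis⟩
    have hpj : p ≤ j := (tau_lt_sig_iff hp).1 hlt0
    have hwj : w.getD j 0 < m := by rwa [hgp, hgj] at hlt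
    refine ⟨hpj, hwj, ?_⟩
    rcases hdis with hB | hlt2 | ⟨hne, heq, hmem⟩ | ⟨hne, h2, hlt4, heq4⟩
    · exact Or.inl (hmemB'.1 hB)
    · exfalso
      rw [hgp] at hlt2
      have hb := mi_le hS1 hm (sig S j - 1)
      rw [← hw'] at hb
      omega
    · by_cases hjS : j ∈ S
      · exfalso
        have ht := tau_add_one hjS
        rw [show sig S j - 1 = tau S j by omega] at hmem
        exact tau_notinB' hjS hmem
      · have hj1 : 1 ≤ j := by
          rcases Nat.eq_zero_or_pos j with rfl | hpos
          · exfalso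
            rw [sig_zero hS1'] at hlt0
            omega
          · exact hpos
        have hpred : sig S (j - 1) + 1 = sig S j := sig_pred hjS hj1
        refine Or.inr ⟨hj1, ?_, ?_⟩
        · rw [show sig S j - 1 = sig S (j - 1) by omega] at hmem
          exact hmemB'.1 hmem
        · rw [show sig S j - 1 = sig S (j - 1) by omega,
            mi_getD_sig (by omega), hgp] at heq
          exact heq
    · exfalso
      rw [hgp] at heq4
      have hb := mi_le hS1 hm (sig S j - 2)
      rw [← hw'] at hb
      omega
  · rintro ⟨hpj, hwj, hcase⟩
    have base : tau S p < sig S j := tau_lt_sig hp hpj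
    have hltw : w'.getD (sig S j) 0 < w'.getD (tau S p) 0 := by
      rw [hgj, hgp]; exact hwj
    rcases hcase with hjB | ⟨hj1, hj1B, hj1m⟩
    · exact ⟨base, hsjlen, hltw, Or.inl (hmemB'.2 hjB)⟩
    · have hjS : j ∉ S := by
        intro hc
        exact hno j (hS hc) hj1m
      have hpred : sig S (j - 1) + 1 = sig S j := sig_pred hjS hj1
      have hne : tau S p + 1 ≠ sig S j := by
        rw [tau_add_one hp]
        intro hc
        have hpjeq : p = j := sig_inj S hc
        subst hpjeq
        exact hno p (hS hp) hj1m
      refine ⟨base, hsjlen, hltw, Or.inr (Or.inr (Or.inl ⟨hne, ?_, ?_⟩))⟩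
      · rw [show sig S j - 1 = sig S (j - 1) by omega,
          mi_getD_sig (by omega), hgp, hj1m]
      · rw [show sig S j - 1 = sig S (j - 1) by omega]
        exact hmemB'.2 hj1B


lemma Qp_card (h : IsSSW w B) (hm : ∀ x ∈ w, x ≤ m)
    (hno : ∀ p ∈ (insert w.length B).erase 0, w.getD (p - 1) 0 ≠ m)
    (hS : S ⊆ (insert w.length B).erase 0) {p : ℕ} (hp : p ∈ S) :
    ((Finset.range w.length).filter (fun j => Qp w B m p j)).card
      = (((insert w.length B).erase 0).filter (fun e => p < e)).card := by
  have hpE := hS hp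
  have hp1 := hE1 h p hpE
  -- step 1 : card = card (B.filter (p ≤ ·))
  have step1 : (B.filter (fun b => p ≤ b)).card
      = ((Finset.range w.length).filter (fun j => Qp w B m p j)).card := by
    apply Finset.card_bij (fun b _ => if w.getD b 0 < m then b else b + 1)
    · intro b hb
      obtain ⟨hbB, hpb⟩ := Finset.mem_filter.1 hb
      by_cases hblt : w.getD b 0 < m
      · rw [if_pos hblt]
        exact Finset.mem_filter.2 ⟨Finset.mem_range.2 (h.1 b hbB), hpb, hblt, Or.inl hbB⟩
      · rw [if_neg hblt]
        have hbm : w.getD b 0 = m := by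
          have := w_le hm b (m := m); omega
        obtain ⟨hb1n, hb1E, hb1lt⟩ := blockm h hm hno hbB hbm
        refine Finset.mem_filter.2 ⟨Finset.mem_range.2 hb1n, by omega, hb1lt,
          Or.inr ⟨by omega, ?_, ?_⟩⟩
        · rw [show b + 1 - 1 = b from rfl]; exact hbB
        · rw [show b + 1 - 1 = b from rfl]; exact hbm
    · intro b1 hb1 b2 hb2 heq
      obtain ⟨hb1B, -⟩ := Finset.mem_filter.1 hb1
      obtain ⟨hb2B, -⟩ := Finset.mem_filter.1 hb2
      by_cases h1 : w.getD b1 0 < m <;> by_cases h2 : w.getD b2 0 < m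
      · rwa [if_pos h1, if_pos h2] at heq
      · rw [if_pos h1, if_neg h2] at heq
        exfalso
        have hbm : w.getD b2 0 = m := by have := w_le hm b2 (m := m); omega
        obtain ⟨-, hb1E, -⟩ := blockm h hm hno hb2B hbm
        exact hb1E (memE.2 ⟨by omega, Or.inr (heq ▸ hb1B)⟩)
      · rw [if_neg h1, if_pos h2] at heq
        exfalso
        have hbm : w.getD b1 0 = m := by have := w_le hm b1 (m := m); omega
        obtain ⟨-, hb1E, -⟩ := blockm h hm hno hb1B hbm
        exact hb1E (memE.2 ⟨by omega, Or.inr (heq ▸ hb2B)⟩)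
      · rw [if_neg h1, if_neg h2] at heq
        omega
    · intro j hj
      obtain ⟨hjn, hpj, hwj, hcase⟩ := Finset.mem_filter.1 hj
      rcases hcase with hjB | ⟨hj1, hj1B, hj1m⟩
      · exact ⟨j, Finset.mem_filter.2 ⟨hjB, hpj⟩, by rw [if_pos hwj]⟩
      · have hpne : p ≠ j := by
          intro hc
          exact hno p hpE (by rw [hc]; exact hj1m)
        have hnlt : ¬ w.getD (j - 1) 0 < m := by omega
        exact ⟨j - 1, Finset.mem_filter.2 ⟨hj1B, by omega⟩,
          by rw [if_neg hnlt]; omega⟩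
  -- step 2 : card (B.filter (p ≤ ·)) = card (E.filter (p < ·))
  have step2 : (B.filter (fun b => p ≤ b)).card
      = (((insert w.length B).erase 0).filter (fun e => p < e)).card := by
    rcases eq_or_lt_of_le hp1.2 with heqn | hplt
    · have e1 : B.filter (fun b => p ≤ b) = ∅ := by
        rw [Finset.filter_eq_empty_iff]
        intro b hb
        have := h.1 b hb
        omega
      have e2 : ((insert w.length B).erase 0).filter (fun e => p < e) = ∅ := by
        rw [Finset.filter_eq_empty_iff]
        intro e he
        rcases (memE.1 he).2 with rfl | hb
        · omega
        · have := h.1 e hb; omega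
      rw [e1, e2]
    · have hpB : p ∈ B := by
        rcases (memE.1 hpE).2 with rfl | hb
        · omega
        · exact hb
      have e1 : B.filter (fun b => p ≤ b) = insert p (B.filter (fun b => p < b)) := by
        ext b
        simp only [Finset.mem_filter, Finset.mem_insert]
        constructor
        · rintro ⟨hb, hpb⟩
          rcases eq_or_lt_of_le hpb with rfl | hlt
          · exact Or.inl rfl
          · exact Or.inr ⟨hb, hlt⟩
        · rintro (rfl | ⟨hb, hlt⟩)
          · exact ⟨hpB, le_refl _⟩
          · exact ⟨hb, le_of_lt hlt⟩
      have e2 : ((insert w.length B).erase 0).filter (fun e => p < e)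
          = insert w.length (B.filter (fun b => p < b)) := by
        ext e
        simp only [Finset.mem_filter, Finset.mem_insert]
        constructor
        · rintro ⟨heE, hpe⟩
          rcases (memE.1 heE).2 with rfl | hb
          · exact Or.inl rfl
          · exact Or.inr ⟨hb, hpe⟩
        · rintro (rfl | ⟨hb, hlt⟩)
          · exact ⟨memE.2 ⟨by omega, Or.inl rfl⟩, hplt⟩
          · exact ⟨memE.2 ⟨by omega, Or.inr hb⟩, hlt⟩
      rw [e1, e2, Finset.card_insert_of_notMem, Finset.card_insert_of_notMem]
      · intro hc
        have := (Finset.mem_filter.1 hc).1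
        have := h.1 _ this
        omega
      · intro hc
        have := (Finset.mem_filter.1 hc).2
        omega
  rw [← step1, step2]


lemma key (h : IsSSW w B) (hm : ∀ x ∈ w, x ≤ m)
    (hno : ∀ p ∈ (insert w.length B).erase 0, w.getD (p - 1) 0 ≠ m)
    (hS : S ⊆ (insert w.length B).erase 0) :
    sminv (multiInsert m S 0 w) (B.image (fun b => b + (S.filter (· ≤ b)).card))
      = sminv w B
        + ∑ p ∈ S, (((insert w.length B).erase 0).filter (fun e => p < e)).card := by
  have hS1 : ∀ p ∈ S, 1 ≤ p ∧ p ≤ w.length := fun q hq => hE1 h q (hS hq)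
  have himg : B.image (fun b => b + (S.filter (· ≤ b)).card) = B.image (sig S) := rfl
  rw [himg, sminv_eq, sminv_eq]
  have hlen : (multiInsert m S 0 w).length = w.length + S.card := mi_length0 hS1
  set P := (Finset.range w.length ×ˢ Finset.range w.length).filter
      (fun q => Sminversion w B q.1 q.2) with hP
  set P' := (Finset.range (multiInsert m S 0 w).length
      ×ˢ Finset.range (multiInsert m S 0 w).length).filter
      (fun q => Sminversion (multiInsert m S 0 w) (B.image (sig S)) q.1 q.2) with hP'
  have hunion : P' = P.image (fun q => (sig S q.1, sig S q.2)) ∪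
      S.biUnion (fun p => ((Finset.range w.length).filter (fun j => Qp w B m p j)).image
        (fun j => (tau S p, sig S j))) := by
    ext ⟨a, b⟩
    simp only [hP', hP, Finset.mem_filter, Finset.mem_product, Finset.mem_range,
      Finset.mem_union, Finset.mem_image, Finset.mem_biUnion]
    constructor
    · rintro ⟨⟨ha, hb⟩, hsm⟩
      have hab : a < b := hsm.1
      rcases cover hS1 (by omega : b < w.length + S.card) with ⟨j, hjn, rfl⟩ | ⟨q, hq, rfl⟩
      · rcases cover hS1 (by omega : a < w.length + S.card) with ⟨i, hin, rfl⟩ | ⟨p, hp, rfl⟩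
        · refine Or.inl ⟨(i, j), ⟨⟨hin, hjn⟩, ?_⟩, rfl⟩
          have hij : i < j := (sig_lt_sig S).1 hab
          exact (main_iff h hm hno hS hij hjn).2 hsm
        · exact Or.inr ⟨p, hp, j, ⟨hjn, (tau_iff h hm hno hS hp hjn).1 hsm⟩, rfl⟩
      · exfalso
        have h1 : (multiInsert m S 0 w).getD (tau S q) 0 = m :=
          mi_getD_tau (fun r hr => (hS1 r hr).2) hq
        have h2 := mi_le hS1 hm a (m := m)
        have h3 := hsm.2.2.1
        omega
    · rintro (⟨⟨i, j⟩, ⟨⟨hi, hj⟩, hsmin⟩, heq⟩ | ⟨p, hpS, j, ⟨hjn, hQ⟩, heq⟩)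
      · obtain ⟨rfl, rfl⟩ : sig S i = a ∧ sig S j = b := by
          simpa [Prod.ext_iff] using heq
        have hsm' := (main_iff h hm hno hS hsmin.1 hj).1 hsmin
        exact ⟨⟨lt_trans hsm'.1 hsm'.2.1, hsm'.2.1⟩, hsm'⟩
      · obtain ⟨rfl, rfl⟩ : tau S p = a ∧ sig S j = b := by
          simpa [Prod.ext_iff] using heq
        have hsm' := (tau_iff h hm hno hS hpS hjn).2 hQ
        exact ⟨⟨lt_trans hsm'.1 hsm'.2.1, hsm'.2.1⟩, hsm'⟩
  rw [hunion, Finset.card_union_of_disjoint, Finset.card_image_of_injective,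
    Finset.card_biUnion]
  · congr 1
    apply Finset.sum_congr rfl
    intro p hp
    rw [Finset.card_image_of_injective, Qp_card h hm hno hS hp]
    intro j1 j2 hj
    simp only [Prod.mk.injEq] at hj
    exact sig_inj S hj.2
  · intro p hp q hq hpq
    rw [Function.onFun, Finset.disjoint_left]
    rintro ⟨a, b⟩ hmem1 hmem2
    simp only [Finset.mem_image, Finset.mem_filter, Prod.mk.injEq] at hmem1 hmem2
    obtain ⟨j1, -, hj1, -⟩ := hmem1
    obtain ⟨j2, -, hj2, -⟩ := hmem2
    exact hpq ((tau_strictMono S).injective (hj1.trans hj2.symm))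
  · rintro ⟨i1, j1⟩ ⟨i2, j2⟩ hq
    simp only [Prod.mk.injEq] at hq ⊢
    exact ⟨sig_inj S hq.1, sig_inj S hq.2⟩
  · rw [Finset.disjoint_left]
    rintro ⟨a, b⟩ hmem1 hmem2
    simp only [Finset.mem_image, Finset.mem_biUnion, Finset.mem_filter,
      Prod.mk.injEq] at hmem1 hmem2
    obtain ⟨⟨i, j⟩, -, hij1, -⟩ := hmem1
    obtain ⟨p, hp, j2, -, hj2, -⟩ := hmem2
    exact sig_ne_tau hp (hij1.trans hj2.symm)


end Main
end S19

instance (w : List ℕ) (B : Finset ℕ) (i : ℕ) : Decidable (AscentAt w B i) := by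
  unfold AscentAt; infer_instance

instance (w : List ℕ) (B : Finset ℕ) (i : ℕ) : Decidable (DescentAt w B i) := by
  unfold DescentAt; infer_instance

namespace S19
open Finset

lemma numAsc_eq (w : List ℕ) (B : Finset ℕ) :
    numAsc w B = ((Finset.range (w.length - 1)).filter (fun i => AscentAt w B i)).card := by
  unfold numAsc
  rw [← Set.ncard_coe_finset]
  congr 1
  ext i
  simp only [Finset.coe_filter, Finset.mem_range, Set.mem_setOf_eq]
  exact ⟨fun hA => ⟨by have := hA.1; omega, hA⟩, fun hh => hh.2⟩

lemma numDesc_eq (w : List ℕ) (B : Finset ℕ) :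
    numDesc w B = ((Finset.range (w.length - 1)).filter (fun i => DescentAt w B i)).card := by
  unfold numDesc
  rw [← Set.ncard_coe_finset]
  congr 1
  ext i
  simp only [Finset.coe_filter, Finset.mem_range, Set.mem_setOf_eq]
  exact ⟨fun hA => ⟨by have := hA.1; omega, hA⟩, fun hh => hh.2⟩

lemma cardE {w : List ℕ} {B : Finset ℕ} (h : IsSSW w B) :
    ((insert w.length B).erase 0).card = w.length - numAsc w B - numDesc w B := by
  rcases eq_or_ne w [] with rfl | hw
  · have hB : B = ∅ := by
      rw [Finset.eq_empty_iff_forall_notMem]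
      intro b hb
      have := h.1 b hb
      simp at this
    subst hB
    simp [numAsc_eq, numDesc_eq]
  · have h0B : 0 ∈ B := h.2.1 hw
    have hn1 : 1 ≤ w.length := by
      cases w
      · simp at hw
      · simp
    have hBn : ∀ b ∈ B, b < w.length := h.1
    set n := w.length with hn
    set FA := (Finset.range (n - 1)).filter (fun i => AscentAt w B i) with hFA
    set FD := (Finset.range (n - 1)).filter (fun i => DescentAt w B i) with hFD
    set FB := (Finset.range (n - 1)).filter (fun i => (i + 1) ∈ B) with hFB
    have hpart : Finset.range (n - 1) = FA ∪ FD ∪ FB := by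
      ext i
      simp only [hFA, hFD, hFB, Finset.mem_union, Finset.mem_filter, Finset.mem_range]
      constructor
      · intro hi
        by_cases hB1 : (i + 1) ∈ B
        · exact Or.inr ⟨hi, hB1⟩
        · have hne := h.2.2.2 i (by omega) hB1
          rcases lt_or_gt_of_ne hne with hlt | hgt
          · exact Or.inl (Or.inl ⟨hi, by omega, hB1, hlt⟩)
          · exact Or.inl (Or.inr ⟨hi, by omega, hB1, hgt⟩)
      · rintro ((⟨hi, -⟩ | ⟨hi, -⟩) | ⟨hi, -⟩) <;> exact hi
    have hd1 : Disjoint FA FD := by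
      rw [Finset.disjoint_left]
      rintro i hi1 hi2
      simp only [hFA, hFD, Finset.mem_filter] at hi1 hi2
      have := hi1.2.2.2
      have := hi2.2.2.2
      omega
    have hd2 : Disjoint (FA ∪ FD) FB := by
      rw [Finset.disjoint_left]
      rintro i hi1 hi2
      simp only [hFA, hFD, hFB, Finset.mem_filter, Finset.mem_union] at hi1 hi2
      rcases hi1 with hi1 | hi1
      · exact hi1.2.2.1 hi2.2
      · exact hi1.2.2.1 hi2.2
    have hclen : n - 1 = FA.card + FD.card + FB.card := by
      rw [← Finset.card_range (n - 1), hpart, Finset.card_union_of_disjoint hd2,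
        Finset.card_union_of_disjoint hd1]
    have hFBcard : FB.card = (B.erase 0).card := by
      apply Finset.card_bij (fun i _ => i + 1)
      · intro a ha
        obtain ⟨h1, h2⟩ := Finset.mem_filter.1 ha
        exact Finset.mem_erase.2 ⟨by omega, h2⟩
      · intro a1 _ a2 _ heq
        omega
      · intro b hb
        obtain ⟨hb0, hbB⟩ := Finset.mem_erase.1 hb
        refine ⟨b - 1, Finset.mem_filter.2 ⟨Finset.mem_range.2 ?_, ?_⟩, by omega⟩
        · have := hBn b hbB; omega
        · rw [show b - 1 + 1 = b by omega]; exact hbB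
    have hEcard : ((insert n B).erase 0).card = B.card := by
      rw [Finset.card_erase_of_mem (Finset.mem_insert.2 (Or.inr h0B)),
        Finset.card_insert_of_notMem (fun hc => lt_irrefl n (hBn n hc))]
      omega
    have hB1 : 1 ≤ B.card := Finset.card_pos.2 ⟨0, h0B⟩
    have hBerase : (B.erase 0).card = B.card - 1 := Finset.card_erase_of_mem h0B
    rw [hEcard, numAsc_eq, numDesc_eq, ← hFA, ← hFD]
    omega

end S19

/-- Double-rise insertion: for a segmented Smirnov word `w` of length `n` with
`k` ascents, `l` descents, all letters `≤ m`, and no block ending with `m`,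
the q-enumerator (w.r.t. `sminv`) of the words obtained by inserting `s`
occurrences of `m`, each at the end of a distinct block, is
`q^{binom(s,2)} [n-k-l choose s]_q · q^{sminv w}`. -/
theorem stmt19 (w : List ℕ) (B : Finset ℕ) (m k l s : ℕ) (h : IsSSW w B)
    (hm : ∀ x ∈ w, x ≤ m)
    (hno : ∀ p ∈ (insert w.length B).erase 0, w.getD (p - 1) 0 ≠ m)
    (hk : numAsc w B = k) (hl : numDesc w B = l) :
    ∑ S ∈ Finset.powersetCard s ((insert w.length B).erase 0),
      Polynomial.X ^ sminv (multiInsert m S 0 w)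
        (B.image (fun b => b + (S.filter (· ≤ b)).card)) =
    Polynomial.X ^ Nat.choose s 2 * qbinom (w.length - k - l) s *
      Polynomial.X ^ sminv w B := by
  subst hk
  subst hl
  rw [← S19.cardE h, ← S19.sumB ((insert w.length B).erase 0) s, Finset.sum_mul]
  apply Finset.sum_congr rfl
  intro S hSmem
  obtain ⟨hSsub, -⟩ := Finset.mem_powersetCard.1 hSmem
  rw [S19.key h hm hno hSsub, pow_add, mul_comm]
end
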